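/- arXiv:2506.11592 — 2 statements merged into one kernel-verified Lean document; each statement's English description precedes it below -/
import Mathlib

section
/- Let E and F be topological graphs with compact vertex and edge spaces, let G be a regular closed subgraph of F, and let m : G → E be a regular factor map. Then there is an isomorphism of topological graphs Σ²E ∪_{Σ²m} Σ²F ≅ Σ²(E ∪_m F), i.e., a pair of homeomorphisms between the vertex spaces and the edge spaces intertwining the source maps and the range maps. -/
open Set Topology

/-- A continuous map which is proper: preimages of compact sets are compact. -/
def ProperCont {X Y : Type*} [TopologicalSpace X] [TopologicalSpace Y] (f : X → Y) : Prop :=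
  Continuous f ∧ ∀ K : Set Y, IsCompact K → IsCompact (f ⁻¹' K)

/-- The raw data of a (topological) graph: a source and a range map from edges to vertices. -/
structure GraphData (V E : Type*) where
  s : E → V
  r : E → V

/-- `g` is a topological graph: source and range are continuous and the range map is a
local homeomorphism. -/
structure IsTopGraph {V E : Type*} [TopologicalSpace V] [TopologicalSpace E]
    (g : GraphData V E) : Prop where
  s_cont : Continuous g.s
  r_cont : Continuous g.r
  r_locHomeo : IsLocalHomeomorph g.r

namespace GraphData

variable {V E : Type*} [TopologicalSpace V] [TopologicalSpace E]

/-- `E⁰_fin`: vertices having a neighborhood whose preimage under the source map is compact. -/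
def finSet (g : GraphData V E) : Set V := {v | ∃ U ∈ nhds v, IsCompact (g.s ⁻¹' U)}

/-- `E⁰_sink = E⁰ \ closure (s(E¹))`. -/
def sinkSet (g : GraphData V E) : Set V := (closure (Set.range g.s))ᶜ

/-- `E⁰_reg = E⁰_fin \ closure (E⁰_sink)`. -/
def regSet (g : GraphData V E) : Set V := g.finSet \ closure g.sinkSet

/-- `E⁰_sing = E⁰ \ E⁰_reg`. -/
def singSet (g : GraphData V E) : Set V := (g.regSet)ᶜ

/-- A set of vertices is negatively invariant if every regular vertex in it emits an
edge whose range lies in it. -/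
def NegInvariant (g : GraphData V E) (Y : Set V) : Prop :=
  ∀ v ∈ Y ∩ g.regSet, ∃ e, g.s e = v ∧ g.r e ∈ Y

/-- A topological graph is row-finite if `s(E¹) = E⁰_reg`. -/
def RowFinite (g : GraphData V E) : Prop := Set.range g.s = g.regSet

/-- The restriction of a graph to a pair of subsets of vertices and edges. -/
def restrict (g : GraphData V E) (G0 : Set V) (G1 : Set E)
    (hs : Set.MapsTo g.s G1 G0) (hr : Set.MapsTo g.r G1 G0) : GraphData G0 G1 where
  s := fun e => ⟨g.s e, hs e.2⟩
  r := fun e => ⟨g.r e, hr e.2⟩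

end GraphData

/-- `(G0, G1)` determines a closed subgraph of `g` (in particular it is itself
a topological graph with the restricted source and range maps). -/
structure IsClosedSubgraph {V E : Type*} [TopologicalSpace V] [TopologicalSpace E]
    (g : GraphData V E) (G0 : Set V) (G1 : Set E) : Prop where
  s_maps : Set.MapsTo g.s G1 G0
  r_maps : Set.MapsTo g.r G1 G0
  closed0 : IsClosed G0
  closed1 : IsClosed G1
  isGraph : IsTopGraph (g.restrict G0 G1 s_maps r_maps)

/-- A regular closed subgraph: a closed subgraph whose vertex set is negatively invariant
and such that `r⁻¹(G⁰) ⊆ G¹`. -/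
structure IsRegularClosedSubgraph {V E : Type*} [TopologicalSpace V] [TopologicalSpace E]
    (g : GraphData V E) (G0 : Set V) (G1 : Set E) extends IsClosedSubgraph g G0 G1 : Prop where
  negInv : g.NegInvariant G0
  r_pre : g.r ⁻¹' G0 ⊆ G1

/-- A regular factor map `(m¹, m⁰) : gG → gF` between topological graphs: a pair of proper
continuous maps satisfying (F1), (F2) and (F3). -/
structure IsRegularFactorMap {V1 E1 V2 E2 : Type*}
    [TopologicalSpace V1] [TopologicalSpace E1] [TopologicalSpace V2] [TopologicalSpace E2]
    (gG : GraphData V1 E1) (gF : GraphData V2 E2) (m0 : V1 → V2) (m1 : E1 → E2) : Prop where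
  proper0 : ProperCont m0
  proper1 : ProperCont m1
  F1r : ∀ e, gF.r (m1 e) = m0 (gG.r e)
  F1s : ∀ e, gF.s (m1 e) = m0 (gG.s e)
  F2 : ∀ (x : E2) (v : V1), gF.r x = m0 v → ∃! e : E1, m1 e = x ∧ gG.r e = v
  F3 : m0 '' gG.singSet ⊆ gF.singSet

section Adjunction

/-- The relation generating the adjunction-space identification: `a ∈ A ⊆ Y` is glued
to `f a ∈ X`. -/
inductive AdjRel {X Y : Type*} {A : Set Y} (f : A → X) : X ⊕ Y → X ⊕ Y → Prop
  | glue (a : A) : AdjRel f (Sum.inl (f a)) (Sum.inr a.1)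

/-- The adjunction space `X ∪_f Y`. -/
def AdjSpace {X Y : Type*} {A : Set Y} (f : A → X) : Type _ := Quot (AdjRel f)

instance {X Y : Type*} [TopologicalSpace X] [TopologicalSpace Y] {A : Set Y} (f : A → X) :
    TopologicalSpace (AdjSpace f) :=
  inferInstanceAs (TopologicalSpace (Quot (AdjRel f)))

/-- The canonical (closed) embedding `X → X ∪_f Y`. -/
def adjInc {X Y : Type*} {A : Set Y} (f : A → X) : X → AdjSpace f :=
  fun x => Quot.mk _ (Sum.inl x)

/-- The canonical map `p : Y → X ∪_f Y`. -/
def adjP {X Y : Type*} {A : Set Y} (f : A → X) : Y → AdjSpace f :=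
  fun y => Quot.mk _ (Sum.inr y)

variable {VE EE VF EF : Type*}

/-- The source map `s_∪` of the adjunction graph `E ∪_m F`. -/
def adjS (gE : GraphData VE EE) (gF : GraphData VF EF) {G0 : Set VF} {G1 : Set EF}
    (m0 : G0 → VE) (m1 : G1 → EE) (hs : Set.MapsTo gF.s G1 G0)
    (hF1s : ∀ e : G1, gE.s (m1 e) = m0 ⟨gF.s e, hs e.2⟩) :
    AdjSpace m1 → AdjSpace m0 :=
  Quot.lift
    (fun x => match x with
      | Sum.inl e => adjInc m0 (gE.s e)
      | Sum.inr e => adjP m0 (gF.s e))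
    (by
      rintro _ _ ⟨a⟩
      show adjInc m0 (gE.s (m1 a)) = adjP m0 (gF.s a.1)
      rw [hF1s a]
      exact Quot.sound (AdjRel.glue ⟨gF.s a.1, hs a.2⟩))

/-- The range map `r_∪` of the adjunction graph `E ∪_m F`. -/
def adjR (gE : GraphData VE EE) (gF : GraphData VF EF) {G0 : Set VF} {G1 : Set EF}
    (m0 : G0 → VE) (m1 : G1 → EE) (hr : Set.MapsTo gF.r G1 G0)
    (hF1r : ∀ e : G1, gE.r (m1 e) = m0 ⟨gF.r e, hr e.2⟩) :
    AdjSpace m1 → AdjSpace m0 :=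
  Quot.lift
    (fun x => match x with
      | Sum.inl e => adjInc m0 (gE.r e)
      | Sum.inr e => adjP m0 (gF.r e))
    (by
      rintro _ _ ⟨a⟩
      show adjInc m0 (gE.r (m1 a)) = adjP m0 (gF.r a.1)
      rw [hF1r a]
      exact Quot.sound (AdjRel.glue ⟨gF.r a.1, hr a.2⟩))

/-- The adjunction graph `E ∪_m F`, obtained by attaching the topological graph `F` to the
topological graph `E` along a closed subgraph `(G0, G1)` of `F` via the pair `(m¹, m⁰)`. -/
def adjGraph (gE : GraphData VE EE) (gF : GraphData VF EF) {G0 : Set VF} {G1 : Set EF}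
    (m0 : G0 → VE) (m1 : G1 → EE)
    (hs : Set.MapsTo gF.s G1 G0) (hr : Set.MapsTo gF.r G1 G0)
    (hF1s : ∀ e : G1, gE.s (m1 e) = m0 ⟨gF.s e, hs e.2⟩)
    (hF1r : ∀ e : G1, gE.r (m1 e) = m0 ⟨gF.r e, hr e.2⟩) :
    GraphData (AdjSpace m0) (AdjSpace m1) where
  s := adjS gE gF m0 m1 hs hF1s
  r := adjR gE gF m0 m1 hr hF1r

end Adjunction

section Suspension

/-- The quantum double suspension graph `Σ²E` of a topological graph `E`: one extra vertex
`w`, one extra loop edge `x` at `w`, and one extra edge from `w` to each old vertex. -/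
def susp {V E : Type*} (g : GraphData V E) : GraphData (Unit ⊕ V) (Unit ⊕ V ⊕ E) where
  s := fun x => match x with
    | Sum.inl _ => Sum.inl ()
    | Sum.inr (Sum.inl _) => Sum.inl ()
    | Sum.inr (Sum.inr e) => Sum.inr (g.s e)
  r := fun x => match x with
    | Sum.inl _ => Sum.inl ()
    | Sum.inr (Sum.inl v) => Sum.inr v
    | Sum.inr (Sum.inr e) => Sum.inr (g.r e)

variable {VE EE VF EF : Type*}

/-- The vertex set of `Σ²G` inside `(Σ²F)⁰`. -/
def suspV0 (G0 : Set VF) : Set (Unit ⊕ VF) := Set.range Sum.inl ∪ Sum.inr '' G0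

/-- The edge set of `Σ²G` inside `(Σ²F)¹`. -/
def suspE1 (G0 : Set VF) (G1 : Set EF) : Set (Unit ⊕ VF ⊕ EF) :=
  Set.range Sum.inl ∪ Sum.inr '' (Sum.inl '' G0 ∪ Sum.inr '' G1)

lemma mem_suspV0 {G0 : Set VF} {v : VF} (h : Sum.inr v ∈ suspV0 G0) : v ∈ G0 := by
  rcases h with ⟨u, hu⟩ | ⟨w, hw, he⟩
  · exact absurd hu (by simp)
  · cases Sum.inr.inj he; exact hw

lemma mem_suspE1_inl {G0 : Set VF} {G1 : Set EF} {v : VF}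
    (h : Sum.inr (Sum.inl v) ∈ suspE1 G0 G1) : v ∈ G0 := by
  rcases h with ⟨u, hu⟩ | ⟨w, hw, he⟩
  · exact absurd hu (by simp)
  · cases Sum.inr.inj he
    rcases hw with ⟨a, ha, hav⟩ | ⟨b, hb, hbv⟩
    · cases Sum.inl.inj hav; exact ha
    · exact absurd hbv (by simp)

lemma mem_suspE1_inr {G0 : Set VF} {G1 : Set EF} {e : EF}
    (h : Sum.inr (Sum.inr e) ∈ suspE1 G0 G1) : e ∈ G1 := by
  rcases h with ⟨u, hu⟩ | ⟨w, hw, he⟩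
  · exact absurd hu (by simp)
  · cases Sum.inr.inj he
    rcases hw with ⟨a, ha, hav⟩ | ⟨b, hb, hbv⟩
    · exact absurd hav (by simp)
    · cases Sum.inr.inj hbv; exact hb

/-- The vertex component of the suspension `Σ²m` of a factor map `m`. -/
def suspM0 {G0 : Set VF} (m0 : G0 → VE) : suspV0 G0 → Unit ⊕ VE := fun x =>
  match x with
  | ⟨Sum.inl _, _⟩ => Sum.inl ()
  | ⟨Sum.inr v, h⟩ => Sum.inr (m0 ⟨v, mem_suspV0 h⟩)

/-- The edge component of the suspension `Σ²m` of a factor map `m`. -/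
def suspM1 {G0 : Set VF} {G1 : Set EF} (m0 : G0 → VE) (m1 : G1 → EE) :
    suspE1 G0 G1 → Unit ⊕ VE ⊕ EE := fun x =>
  match x with
  | ⟨Sum.inl _, _⟩ => Sum.inl ()
  | ⟨Sum.inr (Sum.inl v), h⟩ => Sum.inr (Sum.inl (m0 ⟨v, mem_suspE1_inl h⟩))
  | ⟨Sum.inr (Sum.inr e), h⟩ => Sum.inr (Sum.inr (m1 ⟨e, mem_suspE1_inr h⟩))

lemma susp_s_mapsTo {gF : GraphData VF EF} {G0 : Set VF} {G1 : Set EF}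
    (hs : Set.MapsTo gF.s G1 G0) :
    Set.MapsTo (susp gF).s (suspE1 G0 G1) (suspV0 G0) := by
  rintro (u | (v | e)) hx
  · exact Or.inl ⟨(), rfl⟩
  · exact Or.inl ⟨(), rfl⟩
  · exact Or.inr ⟨gF.s e, hs (mem_suspE1_inr hx), rfl⟩

lemma susp_r_mapsTo {gF : GraphData VF EF} {G0 : Set VF} {G1 : Set EF}
    (hr : Set.MapsTo gF.r G1 G0) :
    Set.MapsTo (susp gF).r (suspE1 G0 G1) (suspV0 G0) := by
  rintro (u | (v | e)) hx
  · exact Or.inl ⟨(), rfl⟩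
  · exact Or.inr ⟨v, mem_suspE1_inl hx, rfl⟩
  · exact Or.inr ⟨gF.r e, hr (mem_suspE1_inr hx), rfl⟩

lemma susp_F1s {gE : GraphData VE EE} {gF : GraphData VF EF} {G0 : Set VF} {G1 : Set EF}
    (hs : Set.MapsTo gF.s G1 G0) (m0 : G0 → VE) (m1 : G1 → EE)
    (hF1s : ∀ e : G1, gE.s (m1 e) = m0 ⟨gF.s e, hs e.2⟩) :
    ∀ e : suspE1 G0 G1, (susp gE).s (suspM1 m0 m1 e) =
      suspM0 m0 ⟨(susp gF).s e, susp_s_mapsTo hs e.2⟩ := by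
  rintro ⟨(u | (v | a)), h⟩
  · rfl
  · rfl
  · exact congrArg Sum.inr (hF1s ⟨a, mem_suspE1_inr h⟩)

lemma susp_F1r {gE : GraphData VE EE} {gF : GraphData VF EF} {G0 : Set VF} {G1 : Set EF}
    (hr : Set.MapsTo gF.r G1 G0) (m0 : G0 → VE) (m1 : G1 → EE)
    (hF1r : ∀ e : G1, gE.r (m1 e) = m0 ⟨gF.r e, hr e.2⟩) :
    ∀ e : suspE1 G0 G1, (susp gE).r (suspM1 m0 m1 e) =
      suspM0 m0 ⟨(susp gF).r e, susp_r_mapsTo hr e.2⟩ := by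
  rintro ⟨(u | (v | a)), h⟩
  · rfl
  · rfl
  · exact congrArg Sum.inr (hF1r ⟨a, mem_suspE1_inr h⟩)

end Suspension

section IsoAux

variable {VE EE VF EF : Type*} [TopologicalSpace VE] [TopologicalSpace EE]
    [TopologicalSpace VF] [TopologicalSpace EF] {G0 : Set VF} {G1 : Set EF}

/-- Forward map for the vertex homeomorphism. -/
def c0Fun (m0 : G0 → VE) : (Unit ⊕ VE) ⊕ (Unit ⊕ VF) → Unit ⊕ AdjSpace m0 :=
  Sum.elim
    (Sum.elim (fun _ => Sum.inl ()) (fun v => Sum.inr (adjInc m0 v)))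
    (Sum.elim (fun _ => Sum.inl ()) (fun v => Sum.inr (adjP m0 v)))

lemma c0Fun_sound (m0 : G0 → VE) : ∀ a b, AdjRel (suspM0 m0) a b → c0Fun m0 a = c0Fun m0 b := by
  rintro _ _ ⟨⟨(u | v), h⟩⟩
  · rfl
  · exact congrArg Sum.inr (Quot.sound (AdjRel.glue ⟨v, mem_suspV0 h⟩))

/-- Inverse map for the vertex homeomorphism. -/
def c0Inv (m0 : G0 → VE) : Unit ⊕ AdjSpace m0 → AdjSpace (suspM0 m0) :=
  Sum.elim (fun _ => Quot.mk _ (Sum.inl (Sum.inl ())))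
    (Quot.lift
      (Sum.elim (fun v => Quot.mk _ (Sum.inl (Sum.inr v)))
        (fun y => Quot.mk _ (Sum.inr (Sum.inr y))))
      (by
        rintro _ _ ⟨a⟩
        exact Quot.sound (AdjRel.glue (f := suspM0 m0) ⟨Sum.inr a.1, Or.inr ⟨a.1, a.2, rfl⟩⟩)))

/-- The vertex homeomorphism. -/
def c0Homeo (m0 : G0 → VE) : AdjSpace (suspM0 m0) ≃ₜ (Unit ⊕ AdjSpace m0) where
  toFun := Quot.lift (c0Fun m0) (c0Fun_sound m0)
  invFun := c0Inv m0
  left_inv := by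
    refine Quot.ind ?_
    rintro ((u | v) | (u | v))
    · rfl
    · rfl
    · exact Quot.sound (AdjRel.glue (f := suspM0 m0) ⟨Sum.inl (), Or.inl ⟨(), rfl⟩⟩)
    · rfl
  right_inv := by
    rintro (u | q)
    · rfl
    · induction q using Quot.ind with
      | _ z => rcases z with v | y <;> rfl
  continuous_toFun := by
    apply continuous_quot_lift
    refine Continuous.sumElim (Continuous.sumElim continuous_const ?_)
      (Continuous.sumElim continuous_const ?_)
    · exact continuous_inr.comp (continuous_quot_mk.comp continuous_inl)
    · exact continuous_inr.comp (continuous_quot_mk.comp continuous_inr)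
  continuous_invFun := by
    refine Continuous.sumElim continuous_const ?_
    apply continuous_quot_lift
    exact Continuous.sumElim
      (continuous_quot_mk.comp (continuous_inl.comp continuous_inr))
      (continuous_quot_mk.comp (continuous_inr.comp continuous_inr))

/-- Forward map for the edge homeomorphism. -/
def c1Fun (m0 : G0 → VE) (m1 : G1 → EE) :
    (Unit ⊕ VE ⊕ EE) ⊕ (Unit ⊕ VF ⊕ EF) → Unit ⊕ AdjSpace m0 ⊕ AdjSpace m1 :=
  Sum.elim
    (Sum.elim (fun _ => Sum.inl ())
      (Sum.elim (fun v => Sum.inr (Sum.inl (adjInc m0 v)))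
        (fun e => Sum.inr (Sum.inr (adjInc m1 e)))))
    (Sum.elim (fun _ => Sum.inl ())
      (Sum.elim (fun v => Sum.inr (Sum.inl (adjP m0 v)))
        (fun e => Sum.inr (Sum.inr (adjP m1 e)))))

lemma c1Fun_sound (m0 : G0 → VE) (m1 : G1 → EE) :
    ∀ a b, AdjRel (suspM1 m0 m1) a b → c1Fun m0 m1 a = c1Fun m0 m1 b := by
  rintro _ _ ⟨⟨(u | (v | e)), h⟩⟩
  · rfl
  · exact congrArg (fun q => Sum.inr (Sum.inl q))
      (Quot.sound (AdjRel.glue ⟨v, mem_suspE1_inl h⟩))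
  · exact congrArg (fun q => Sum.inr (Sum.inr q))
      (Quot.sound (AdjRel.glue ⟨e, mem_suspE1_inr h⟩))

/-- Inverse map for the edge homeomorphism. -/
def c1Inv (m0 : G0 → VE) (m1 : G1 → EE) :
    Unit ⊕ AdjSpace m0 ⊕ AdjSpace m1 → AdjSpace (suspM1 m0 m1) :=
  Sum.elim (fun _ => Quot.mk _ (Sum.inl (Sum.inl ())))
    (Sum.elim
      (Quot.lift
        (Sum.elim (fun v => Quot.mk _ (Sum.inl (Sum.inr (Sum.inl v))))
          (fun y => Quot.mk _ (Sum.inr (Sum.inr (Sum.inl y)))))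
        (by
          rintro _ _ ⟨a⟩
          exact Quot.sound (AdjRel.glue (f := suspM1 m0 m1)
            ⟨Sum.inr (Sum.inl a.1), Or.inr ⟨Sum.inl a.1, Or.inl ⟨a.1, a.2, rfl⟩, rfl⟩⟩)))
      (Quot.lift
        (Sum.elim (fun e => Quot.mk _ (Sum.inl (Sum.inr (Sum.inr e))))
          (fun y => Quot.mk _ (Sum.inr (Sum.inr (Sum.inr y)))))
        (by
          rintro _ _ ⟨a⟩
          exact Quot.sound (AdjRel.glue (f := suspM1 m0 m1)
            ⟨Sum.inr (Sum.inr a.1), Or.inr ⟨Sum.inr a.1, Or.inr ⟨a.1, a.2, rfl⟩, rfl⟩⟩))))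

/-- The edge homeomorphism. -/
def c1Homeo (m0 : G0 → VE) (m1 : G1 → EE) :
    AdjSpace (suspM1 m0 m1) ≃ₜ (Unit ⊕ AdjSpace m0 ⊕ AdjSpace m1) where
  toFun := Quot.lift (c1Fun m0 m1) (c1Fun_sound m0 m1)
  invFun := c1Inv m0 m1
  left_inv := by
    refine Quot.ind ?_
    rintro ((u | (v | e)) | (u | (v | e)))
    · rfl
    · rfl
    · rfl
    · exact Quot.sound (AdjRel.glue (f := suspM1 m0 m1) ⟨Sum.inl (), Or.inl ⟨(), rfl⟩⟩)
    · rfl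
    · rfl
  right_inv := by
    rintro (u | (q | q))
    · rfl
    · induction q using Quot.ind with
      | _ z => rcases z with v | y <;> rfl
    · induction q using Quot.ind with
      | _ z => rcases z with v | y <;> rfl
  continuous_toFun := by
    apply continuous_quot_lift
    refine Continuous.sumElim
      (Continuous.sumElim continuous_const (Continuous.sumElim ?_ ?_))
      (Continuous.sumElim continuous_const (Continuous.sumElim ?_ ?_))
    · exact (continuous_inr.comp continuous_inl).comp (continuous_quot_mk.comp continuous_inl)
    · exact (continuous_inr.comp continuous_inr).comp (continuous_quot_mk.comp continuous_inl)
    · exact (continuous_inr.comp continuous_inl).comp (continuous_quot_mk.comp continuous_inr)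
    · exact (continuous_inr.comp continuous_inr).comp (continuous_quot_mk.comp continuous_inr)
  continuous_invFun := by
    refine Continuous.sumElim continuous_const (Continuous.sumElim ?_ ?_)
    · apply continuous_quot_lift
      exact Continuous.sumElim
        (continuous_quot_mk.comp ((continuous_inl.comp continuous_inr).comp continuous_inl))
        (continuous_quot_mk.comp ((continuous_inr.comp continuous_inr).comp continuous_inl))
    · apply continuous_quot_lift
      exact Continuous.sumElim
        (continuous_quot_mk.comp ((continuous_inl.comp continuous_inr).comp continuous_inr))
        (continuous_quot_mk.comp ((continuous_inr.comp continuous_inr).comp continuous_inr))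

end IsoAux


/-- Let `E` and `F` be topological graphs with compact vertex and edge spaces, let `G` be a
regular closed subgraph of `F`, and let `m : G → E` be a regular factor map. Then there is
an isomorphism of topological graphs `Σ²E ∪_{Σ²m} Σ²F ≅ Σ²(E ∪_m F)`: a pair of
homeomorphisms between the vertex spaces and the edge spaces intertwining the source maps
and the range maps. -/
theorem susp_adjGraph_iso
    {VE EE VF EF : Type*} [TopologicalSpace VE] [TopologicalSpace EE]
    [TopologicalSpace VF] [TopologicalSpace EF]
    [CompactSpace VE] [T2Space VE] [CompactSpace EE] [T2Space EE]
    [CompactSpace VF] [T2Space VF] [CompactSpace EF] [T2Space EF]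
    (gE : GraphData VE EE) (gF : GraphData VF EF)
    (hE : IsTopGraph gE) (hF : IsTopGraph gF)
    {G0 : Set VF} {G1 : Set EF}
    (hGF : IsRegularClosedSubgraph gF G0 G1)
    (m0 : G0 → VE) (m1 : G1 → EE)
    (hF1s : ∀ e : G1, gE.s (m1 e) = m0 ⟨gF.s e, hGF.s_maps e.2⟩)
    (hF1r : ∀ e : G1, gE.r (m1 e) = m0 ⟨gF.r e, hGF.r_maps e.2⟩)
    (hm : IsRegularFactorMap (gF.restrict G0 G1 hGF.s_maps hGF.r_maps) gE m0 m1) :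
    ∃ (c0 : AdjSpace (suspM0 m0) ≃ₜ (Unit ⊕ AdjSpace m0))
      (c1 : AdjSpace (suspM1 m0 m1) ≃ₜ (Unit ⊕ AdjSpace m0 ⊕ AdjSpace m1)),
      (∀ x, c0 ((adjGraph (susp gE) (susp gF) (suspM0 m0) (suspM1 m0 m1)
            (susp_s_mapsTo hGF.s_maps) (susp_r_mapsTo hGF.r_maps)
            (susp_F1s hGF.s_maps m0 m1 hF1s) (susp_F1r hGF.r_maps m0 m1 hF1r)).s x) =
          (susp (adjGraph gE gF m0 m1 hGF.s_maps hGF.r_maps hF1s hF1r)).s (c1 x)) ∧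
      (∀ x, c0 ((adjGraph (susp gE) (susp gF) (suspM0 m0) (suspM1 m0 m1)
            (susp_s_mapsTo hGF.s_maps) (susp_r_mapsTo hGF.r_maps)
            (susp_F1s hGF.s_maps m0 m1 hF1s) (susp_F1r hGF.r_maps m0 m1 hF1r)).r x) =
          (susp (adjGraph gE gF m0 m1 hGF.s_maps hGF.r_maps hF1s hF1r)).r (c1 x)) := by
  refine ⟨c0Homeo m0, c1Homeo m0 m1, ?_, ?_⟩ <;>
  · refine Quot.ind ?_
    rintro ((u | (v | e)) | (u | (v | e))) <;>
      simp only [c0Homeo, c1Homeo, Homeomorph.homeomorph_mk_coe, Equiv.coe_fn_mk] <;> rfl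
end

section
/- Let E ∪ F be a regular union graph, i.e., the intersection graph E ∩ F is a regular closed subgraph of both E and F. Then, identifying E⁰ and F⁰ with their images in (E ∪ F)⁰, the singular vertex sets satisfy (E ∪ F)⁰_sing = E⁰_sing ∪ F⁰_sing. -/
open Set Topology

section AdjLemmas

open scoped Classical

set_option linter.unusedSectionVars false

variable {Y X : Type*} [TopologicalSpace X] [TopologicalSpace Y] {A : Set Y} {f : A → X}

lemma adjInc_glue (f : A → X) (a : A) : adjInc f (f a) = adjP f a.1 :=
  Quot.sound (AdjRel.glue a)

/-- A name-resolving retraction used to distinguish classes in the adjunction space. -/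
noncomputable def adjRep (f : A → X) : AdjSpace f → X ⊕ Y :=
  Quot.lift (fun z => match z with
    | Sum.inl x => Sum.inl x
    | Sum.inr y => if h : y ∈ A then Sum.inl (f ⟨y, h⟩) else Sum.inr y)
  (by rintro _ _ ⟨a⟩
      show Sum.inl (f a) =
        if h : (a : Y) ∈ A then Sum.inl (f ⟨(a : Y), h⟩) else Sum.inr (a : Y)
      rw [dif_pos a.2])

lemma adjRep_inc (x : X) : adjRep f (adjInc f x) = Sum.inl x := rfl

lemma adjRep_p (y : Y) :
    adjRep f (adjP f y) = if h : y ∈ A then Sum.inl (f ⟨y, h⟩) else Sum.inr y := rfl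

lemma adjInc_injective (f : A → X) : Function.Injective (adjInc f) := by
  intro x x' h
  have := congrArg (adjRep f) h
  rw [adjRep_inc, adjRep_inc] at this
  exact Sum.inl.inj this

lemma adjInc_eq_adjP {x : X} {y : Y} :
    adjInc f x = adjP f y ↔ ∃ h : y ∈ A, f ⟨y, h⟩ = x := by
  constructor
  · intro h
    have := congrArg (adjRep f) h
    rw [adjRep_inc, adjRep_p] at this
    by_cases hy : y ∈ A
    · rw [dif_pos hy] at this
      exact ⟨hy, (Sum.inl.inj this).symm⟩
    · rw [dif_neg hy] at this
      exact absurd this (by simp)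
  · rintro ⟨h, rfl⟩
    exact adjInc_glue f ⟨y, h⟩

lemma adjP_injective (hinj : Function.Injective f) : Function.Injective (adjP f) := by
  intro y y' h
  have := congrArg (adjRep f) h
  rw [adjRep_p, adjRep_p] at this
  by_cases hy : y ∈ A <;> by_cases hy' : y' ∈ A
  · rw [dif_pos hy, dif_pos hy'] at this
    have := hinj (Sum.inl.inj this)
    exact congrArg Subtype.val this
  · rw [dif_pos hy, dif_neg hy'] at this; exact absurd this (by simp)
  · rw [dif_neg hy, dif_pos hy'] at this; exact absurd this (by simp)
  · rw [dif_neg hy, dif_neg hy'] at this; exact Sum.inr.inj this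

lemma adj_cases (v : AdjSpace f) : (∃ x, adjInc f x = v) ∨ ∃ y, adjP f y = v := by
  induction v using Quot.ind with
  | _ z =>
    cases z with
    | inl x => exact Or.inl ⟨x, rfl⟩
    | inr y => exact Or.inr ⟨y, rfl⟩

lemma continuous_adjInc : Continuous (adjInc f) :=
  continuous_quot_mk.comp continuous_inl

lemma continuous_adjP : Continuous (adjP f) :=
  continuous_quot_mk.comp continuous_inr

lemma isOpen_adjSpace_iff {S : Set (AdjSpace f)} :
    IsOpen S ↔ IsOpen (adjInc f ⁻¹' S) ∧ IsOpen (adjP f ⁻¹' S) := by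
  exact (isQuotientMap_quot_mk (r := AdjRel f)).isOpen_preimage.symm.trans isOpen_sum_iff

lemma isClosed_adjSpace_iff {S : Set (AdjSpace f)} :
    IsClosed S ↔ IsClosed (adjInc f ⁻¹' S) ∧ IsClosed (adjP f ⁻¹' S) := by
  rw [← isOpen_compl_iff, isOpen_adjSpace_iff]
  simp [isOpen_compl_iff, Set.preimage_compl]

lemma adjP_preimage_inc (S : Set X) :
    adjP f ⁻¹' (adjInc f '' S) = Subtype.val '' (f ⁻¹' S) := by
  ext y
  constructor
  · rintro ⟨x, hx, he⟩
    obtain ⟨h, hf⟩ := adjInc_eq_adjP.mp he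
    exact ⟨⟨y, h⟩, by rwa [mem_preimage, hf], rfl⟩
  · rintro ⟨a, ha, rfl⟩
    exact ⟨f a, ha, adjInc_glue f a⟩

lemma adjInc_preimage_p (S : Set Y) :
    adjInc f ⁻¹' (adjP f '' S) = f '' (Subtype.val ⁻¹' S) := by
  ext x
  constructor
  · rintro ⟨y, hy, he⟩
    obtain ⟨h, hf⟩ := adjInc_eq_adjP.mp he.symm
    exact ⟨⟨y, h⟩, hy, hf⟩
  · rintro ⟨a, ha, rfl⟩
    exact ⟨a.1, ha, (adjInc_glue f a).symm⟩

lemma isClosedMap_adjInc (hA : IsClosed A) (hf : Continuous f) : IsClosedMap (adjInc f) := by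
  intro C hC
  rw [isClosed_adjSpace_iff]
  constructor
  · rw [Set.preimage_image_eq _ (adjInc_injective f)]; exact hC
  · rw [adjP_preimage_inc]
    exact hA.isClosedEmbedding_subtypeVal.isClosedMap _ (hC.preimage hf)

lemma isClosedMap_adjP (hpm : IsProperMap f) (hinj : Function.Injective f) :
    IsClosedMap (adjP f) := by
  intro C hC
  rw [isClosed_adjSpace_iff]
  constructor
  · rw [adjInc_preimage_p]
    exact hpm.isClosedMap _ (hC.preimage continuous_subtype_val)
  · rw [Set.preimage_image_eq _ (adjP_injective hinj)]; exact hC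

lemma isClosedEmbedding_adjInc (hA : IsClosed A) (hf : Continuous f) :
    Topology.IsClosedEmbedding (adjInc f) :=
  .of_continuous_injective_isClosedMap continuous_adjInc (adjInc_injective f)
    (isClosedMap_adjInc hA hf)

lemma isClosedEmbedding_adjP (hpm : IsProperMap f) (hinj : Function.Injective f) :
    Topology.IsClosedEmbedding (adjP f) :=
  .of_continuous_injective_isClosedMap continuous_adjP (adjP_injective hinj)
    (isClosedMap_adjP hpm hinj)

lemma adj_image_preimage_union (S : Set (AdjSpace f)) :
    adjInc f '' (adjInc f ⁻¹' S) ∪ adjP f '' (adjP f ⁻¹' S) = S := by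
  apply Set.Subset.antisymm
  · exact Set.union_subset (Set.image_preimage_subset _ _) (Set.image_preimage_subset _ _)
  · intro v hv
    rcases adj_cases v with ⟨x, rfl⟩ | ⟨y, rfl⟩
    · exact Or.inl ⟨x, hv, rfl⟩
    · exact Or.inr ⟨y, hv, rfl⟩

end AdjLemmas

section GraphLemmas

variable {V E : Type*} [TopologicalSpace V] [TopologicalSpace E]

lemma GraphData.isOpen_finSet (g : GraphData V E) : IsOpen g.finSet := by
  rw [isOpen_iff_mem_nhds]
  rintro v ⟨U, hU, hc⟩
  refine Filter.mem_of_superset (interior_mem_nhds.2 hU) ?_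
  exact fun w hw => ⟨U, mem_interior_iff_mem_nhds.1 hw, hc⟩

lemma GraphData.isOpen_regSet (g : GraphData V E) : IsOpen g.regSet :=
  g.isOpen_finSet.sdiff isClosed_closure

lemma GraphData.isClosed_singSet (g : GraphData V E) : IsClosed g.singSet :=
  g.isOpen_regSet.isClosed_compl

lemma GraphData.singSet_eq (g : GraphData V E) :
    g.singSet = g.finSetᶜ ∪ closure g.sinkSet := by
  rw [GraphData.singSet, GraphData.regSet, Set.diff_eq, Set.compl_inter, compl_compl]

lemma GraphData.closure_sinkSet_subset_singSet (g : GraphData V E) :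
    closure g.sinkSet ⊆ g.singSet := by
  rw [g.singSet_eq]; exact Set.subset_union_right

end GraphLemmas

lemma mem_closure_inter_of_open {α : Type*} [TopologicalSpace α] {x : α} {S O : Set α}
    (hx : x ∈ closure S) (hO : IsOpen O) (hxO : x ∈ O) : x ∈ closure (S ∩ O) := by
  rw [mem_closure_iff] at hx ⊢
  intro o ho hxo
  obtain ⟨z, hz⟩ := hx (o ∩ O) (ho.inter hO) ⟨hxo, hxO⟩
  exact ⟨z, hz.1.1, hz.2, hz.1.2⟩


section UnionMain

set_option linter.unusedSectionVars false
set_option maxHeartbeats 1000000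

lemma GraphData.mem_regSet {V E : Type*} [TopologicalSpace V] [TopologicalSpace E]
    {g : GraphData V E} {v : V} :
    v ∈ g.regSet ↔ v ∈ g.finSet ∧ v ∉ closure g.sinkSet := Iff.rfl

lemma GraphData.mem_singSet {V E : Type*} [TopologicalSpace V] [TopologicalSpace E]
    {g : GraphData V E} {v : V} : v ∈ g.singSet ↔ v ∉ g.regSet := Iff.rfl

lemma GraphData.mem_sinkSet {V E : Type*} [TopologicalSpace V] [TopologicalSpace E]
    {g : GraphData V E} {v : V} : v ∈ g.sinkSet ↔ v ∉ closure (Set.range g.s) := Iff.rfl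

variable {VE EE VF EF : Type*} [TopologicalSpace VE] [TopologicalSpace EE]
    [TopologicalSpace VF] [TopologicalSpace EF]
    [LocallyCompactSpace VE] [T2Space VE] [LocallyCompactSpace EE] [T2Space EE]
    [LocallyCompactSpace VF] [T2Space VF] [LocallyCompactSpace EF] [T2Space EF]
    {gE : GraphData VE EE} {gF : GraphData VF EF}
    (hE : IsTopGraph gE) (hF : IsTopGraph gF)
    {G0 : Set VF} {G1 : Set EF}
    (hGF : IsRegularClosedSubgraph gF G0 G1)
    {m0 : G0 → VE} {m1 : G1 → EE} (hm0 : ProperCont m0) (hm1 : ProperCont m1)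
    (hinj0 : Function.Injective m0) (hinj1 : Function.Injective m1)
    (hF1s : ∀ e : G1, gE.s (m1 e) = m0 ⟨gF.s e, hGF.s_maps e.2⟩)
    (hF1r : ∀ e : G1, gE.r (m1 e) = m0 ⟨gF.r e, hGF.r_maps e.2⟩)
    (hGE : IsRegularClosedSubgraph gE (Set.range m0) (Set.range m1))

local notation "gU" => adjGraph gE gF m0 m1 hGF.s_maps hGF.r_maps hF1s hF1r

include hE hF hGF hm0 hm1 hinj0 hinj1 hF1s hF1r hGE

lemma aux_m0_proper : IsProperMap m0 :=
  isProperMap_iff_isCompact_preimage.mpr ⟨hm0.1, fun K hK => hm0.2 K hK⟩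

lemma aux_m1_proper : IsProperMap m1 :=
  isProperMap_iff_isCompact_preimage.mpr ⟨hm1.1, fun K hK => hm1.2 K hK⟩

lemma finU_rep_inc {v : AdjSpace m0} (hv : v ∈ (gU).finSet) {x : VE}
    (hx : adjInc m0 x = v) : x ∈ gE.finSet := by
  obtain ⟨W, hW, hc⟩ := hv
  subst hx
  refine ⟨adjInc m0 ⁻¹' W, continuous_adjInc.continuousAt.preimage_mem_nhds hW, ?_⟩
  have h2 : gE.s ⁻¹' (adjInc m0 ⁻¹' W) = adjInc m1 ⁻¹' ((gU).s ⁻¹' W) := rfl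
  rw [h2]
  exact (isClosedEmbedding_adjInc hGF.closed1 hm1.1).isCompact_preimage hc

lemma finU_rep_p {v : AdjSpace m0} (hv : v ∈ (gU).finSet) {y : VF}
    (hy : adjP m0 y = v) : y ∈ gF.finSet := by
  obtain ⟨W, hW, hc⟩ := hv
  subst hy
  refine ⟨adjP m0 ⁻¹' W, continuous_adjP.continuousAt.preimage_mem_nhds hW, ?_⟩
  have h2 : gF.s ⁻¹' (adjP m0 ⁻¹' W) = adjP m1 ⁻¹' ((gU).s ⁻¹' W) := rfl
  rw [h2]
  exact (isClosedEmbedding_adjP (aux_m1_proper hE hF hGF hm0 hm1 hinj0 hinj1 hF1s hF1r hGE)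
    hinj1).isCompact_preimage hc

lemma sU_preimage_compact {KE : Set VE} {KF : Set VF}
    (hcE : IsCompact (gE.s ⁻¹' (KE ∪ m0 '' (Subtype.val ⁻¹' KF))))
    (hcF : IsCompact (gF.s ⁻¹' (KF ∪ Subtype.val '' (m0 ⁻¹' KE)))) :
    IsCompact ((gU).s ⁻¹' (adjInc m0 '' KE ∪ adjP m0 '' KF)) := by
  rw [← adj_image_preimage_union ((gU).s ⁻¹' (adjInc m0 '' KE ∪ adjP m0 '' KF))]
  apply IsCompact.union
  · apply IsCompact.image _ continuous_adjInc
    have h2 : adjInc m1 ⁻¹' ((gU).s ⁻¹' (adjInc m0 '' KE ∪ adjP m0 '' KF))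
        = gE.s ⁻¹' (adjInc m0 ⁻¹' (adjInc m0 '' KE ∪ adjP m0 '' KF)) := rfl
    rw [h2, Set.preimage_union, Set.preimage_image_eq _ (adjInc_injective m0),
      adjInc_preimage_p]
    exact hcE
  · apply IsCompact.image _ continuous_adjP
    have h2 : adjP m1 ⁻¹' ((gU).s ⁻¹' (adjInc m0 '' KE ∪ adjP m0 '' KF))
        = gF.s ⁻¹' (adjP m0 ⁻¹' (adjInc m0 '' KE ∪ adjP m0 '' KF)) := rfl
    rw [h2, Set.preimage_union, adjP_preimage_inc,
      Set.preimage_image_eq _ (adjP_injective hinj0), Set.union_comm]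
    exact hcF

lemma finU_glued (g : G0) (hEfin : m0 g ∈ gE.finSet) (hFfin : g.1 ∈ gF.finSet) :
    adjP m0 g.1 ∈ (gU).finSet := by
  obtain ⟨UE, hUE, hUEc⟩ := hEfin
  obtain ⟨UF, hUF, hUFc⟩ := hFfin
  have hm0p : IsProperMap m0 := aux_m0_proper hE hF hGF hm0 hm1 hinj0 hinj1 hF1s hF1r hGE
  have hvalF : Topology.IsClosedEmbedding (Subtype.val : G0 → VF) :=
    hGF.closed0.isClosedEmbedding_subtypeVal
  have hNc : IsClosed ((Subtype.val '' (m0 ⁻¹' (interior UE)ᶜ) : Set VF)) :=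
    hvalF.isClosedMap _ ((isClosed_compl_iff.mpr isOpen_interior).preimage hm0.1)
  have hgN : g.1 ∈ (Subtype.val '' (m0 ⁻¹' (interior UE)ᶜ))ᶜ := by
    rintro ⟨a, ha, hav⟩
    have hag : a = g := Subtype.ext hav
    rw [hag] at ha
    exact ha (mem_interior_iff_mem_nhds.2 hUE)
  obtain ⟨KF, hKFn, hKFsub, hKFc⟩ :=
    local_compact_nhds (Filter.inter_mem hUF (hNc.isOpen_compl.mem_nhds hgN))
  have hDc : IsClosed (m0 '' (Subtype.val ⁻¹' (interior KF)ᶜ)) :=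
    hm0p.isClosedMap _
      ((isClosed_compl_iff.mpr isOpen_interior).preimage continuous_subtype_val)
  have hgD : m0 g ∉ m0 '' (Subtype.val ⁻¹' (interior KF)ᶜ) := by
    rintro ⟨a, ha, hav⟩
    have hag : a = g := hinj0 hav
    rw [hag] at ha
    exact ha (mem_interior_iff_mem_nhds.2 hKFn)
  obtain ⟨KE, hKEn, hKEsub, hKEc⟩ :=
    local_compact_nhds (Filter.inter_mem hUE (hDc.isOpen_compl.mem_nhds hgD))
  have him : m0 '' (Subtype.val ⁻¹' KF) ⊆ UE := by
    rintro _ ⟨a, ha, rfl⟩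
    have h2 := (hKFsub ha).2
    have h3 : m0 a ∈ interior UE := by
      by_contra hno
      exact h2 ⟨a, hno, rfl⟩
    exact interior_subset h3
  have hback : Subtype.val '' (m0 ⁻¹' KE) ⊆ KF := by
    rintro _ ⟨a, ha, rfl⟩
    have h2 := (hKEsub ha).2
    have h3 : a.1 ∈ interior KF := by
      by_contra hno
      exact h2 ⟨a, hno, rfl⟩
    exact interior_subset h3
  refine ⟨adjInc m0 '' KE ∪ adjP m0 '' KF, ?_, ?_⟩
  · rw [mem_nhds_iff]
    refine ⟨(adjInc m0 '' (interior KE)ᶜ ∪ adjP m0 '' (interior KF)ᶜ)ᶜ, ?_, ?_, ?_⟩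
    · intro u hu
      rcases adj_cases u with ⟨x, rfl⟩ | ⟨y, rfl⟩
      · left
        refine ⟨x, ?_, rfl⟩
        have h3 : x ∈ interior KE := by
          by_contra hno
          exact hu (Or.inl ⟨x, hno, rfl⟩)
        exact interior_subset h3
      · right
        refine ⟨y, ?_, rfl⟩
        have h3 : y ∈ interior KF := by
          by_contra hno
          exact hu (Or.inr ⟨y, hno, rfl⟩)
        exact interior_subset h3
    · exact (((isClosedMap_adjInc hGF.closed0 hm0.1) _
          (isClosed_compl_iff.mpr isOpen_interior)).union
        ((isClosedMap_adjP hm0p hinj0) _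
          (isClosed_compl_iff.mpr isOpen_interior))).isOpen_compl
    · rintro (⟨x, hx, he⟩ | ⟨y, hy, he⟩)
      · obtain ⟨h, hf⟩ := adjInc_eq_adjP.mp he
        have hag : (⟨g.1, h⟩ : G0) = g := Subtype.ext rfl
        rw [hag] at hf
        rw [← hf] at hx
        exact hx (mem_interior_iff_mem_nhds.2 hKEn)
      · have hyg : y = g.1 := adjP_injective hinj0 he
        rw [hyg] at hy
        exact hy (mem_interior_iff_mem_nhds.2 hKFn)
  · apply sU_preimage_compact hE hF hGF hm0 hm1 hinj0 hinj1 hF1s hF1r hGE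
    · refine IsCompact.of_isClosed_subset hUEc ?_ ?_
      · exact (hKEc.isClosed.union
          (((hvalF.isCompact_preimage hKFc).image hm0.1).isClosed)).preimage hE.s_cont
      · exact Set.preimage_mono (Set.union_subset (fun z hz => (hKEsub hz).1) him)
    · refine IsCompact.of_isClosed_subset hUFc ?_ ?_
      · exact (hKFc.isClosed.union
          (hvalF.isClosedMap _ (hKEc.isClosed.preimage hm0.1))).preimage hF.s_cont
      · exact Set.preimage_mono (Set.union_subset (fun z hz => (hKFsub hz).1)
          (fun z hz => (hKFsub (hback hz)).1))

lemma finU_inc_only {x : VE} (hxr : x ∉ Set.range m0) (hEfin : x ∈ gE.finSet) :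
    adjInc m0 x ∈ (gU).finSet := by
  obtain ⟨UE, hUE, hUEc⟩ := hEfin
  have hm0p : IsProperMap m0 := aux_m0_proper hE hF hGF hm0 hm1 hinj0 hinj1 hF1s hF1r hGE
  have hrc : IsClosed (Set.range m0) := hm0p.isClosedMap.isClosed_range
  obtain ⟨KE, hKEn, hKEsub, hKEc⟩ :=
    local_compact_nhds (Filter.inter_mem hUE (hrc.isOpen_compl.mem_nhds hxr))
  refine ⟨adjInc m0 '' KE ∪ adjP m0 '' (∅ : Set VF), ?_, ?_⟩
  · rw [mem_nhds_iff]
    refine ⟨(adjInc m0 '' (interior KE)ᶜ ∪ adjP m0 '' (Set.univ : Set VF))ᶜ, ?_, ?_, ?_⟩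
    · intro u hu
      rcases adj_cases u with ⟨x', rfl⟩ | ⟨y, rfl⟩
      · left
        refine ⟨x', ?_, rfl⟩
        have h3 : x' ∈ interior KE := by
          by_contra hno
          exact hu (Or.inl ⟨x', hno, rfl⟩)
        exact interior_subset h3
      · exact absurd (Or.inr ⟨y, trivial, rfl⟩) hu
    · exact (((isClosedMap_adjInc hGF.closed0 hm0.1) _
          (isClosed_compl_iff.mpr isOpen_interior)).union
        ((isClosedMap_adjP hm0p hinj0) _ isClosed_univ)).isOpen_compl
    · rintro (⟨x', hx', he⟩ | ⟨y, hy, he⟩)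
      · have hxx : x' = x := adjInc_injective m0 he
        rw [hxx] at hx'
        exact hx' (mem_interior_iff_mem_nhds.2 hKEn)
      · obtain ⟨h, hf⟩ := adjInc_eq_adjP.mp he.symm
        exact hxr ⟨⟨y, h⟩, hf⟩
  · apply sU_preimage_compact hE hF hGF hm0 hm1 hinj0 hinj1 hF1s hF1r hGE
    · simp only [Set.preimage_empty, Set.image_empty, Set.union_empty]
      exact IsCompact.of_isClosed_subset hUEc (hKEc.isClosed.preimage hE.s_cont)
        (Set.preimage_mono (fun z hz => (hKEsub hz).1))
    · have h0 : m0 ⁻¹' KE = (∅ : Set G0) := by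
        ext a
        simp only [Set.mem_preimage, Set.mem_empty_iff_false, iff_false]
        intro ha
        exact (hKEsub ha).2 ⟨a, rfl⟩
      simp [h0]

lemma finU_p_only {y : VF} (hyG : y ∉ G0) (hFfin : y ∈ gF.finSet) :
    adjP m0 y ∈ (gU).finSet := by
  obtain ⟨UF, hUF, hUFc⟩ := hFfin
  have hm0p : IsProperMap m0 := aux_m0_proper hE hF hGF hm0 hm1 hinj0 hinj1 hF1s hF1r hGE
  obtain ⟨KF, hKFn, hKFsub, hKFc⟩ :=
    local_compact_nhds (Filter.inter_mem hUF (hGF.closed0.isOpen_compl.mem_nhds hyG))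
  refine ⟨adjInc m0 '' (∅ : Set VE) ∪ adjP m0 '' KF, ?_, ?_⟩
  · rw [mem_nhds_iff]
    refine ⟨(adjInc m0 '' (Set.univ : Set VE) ∪ adjP m0 '' (interior KF)ᶜ)ᶜ, ?_, ?_, ?_⟩
    · intro u hu
      rcases adj_cases u with ⟨x, rfl⟩ | ⟨y', rfl⟩
      · exact absurd (Or.inl ⟨x, trivial, rfl⟩) hu
      · right
        refine ⟨y', ?_, rfl⟩
        have h3 : y' ∈ interior KF := by
          by_contra hno
          exact hu (Or.inr ⟨y', hno, rfl⟩)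
        exact interior_subset h3
    · exact (((isClosedMap_adjInc hGF.closed0 hm0.1) _ isClosed_univ).union
        ((isClosedMap_adjP hm0p hinj0) _
          (isClosed_compl_iff.mpr isOpen_interior))).isOpen_compl
    · rintro (⟨x, hx, he⟩ | ⟨y', hy', he⟩)
      · obtain ⟨h, hf⟩ := adjInc_eq_adjP.mp he
        exact hyG h
      · have hyy : y' = y := adjP_injective hinj0 he
        rw [hyy] at hy'
        exact hy' (mem_interior_iff_mem_nhds.2 hKFn)
  · apply sU_preimage_compact hE hF hGF hm0 hm1 hinj0 hinj1 hF1s hF1r hGE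
    · have h0 : Subtype.val ⁻¹' KF = (∅ : Set G0) := by
        ext a
        simp only [Set.mem_preimage, Set.mem_empty_iff_false, iff_false]
        intro ha
        exact (hKFsub ha).2 a.2
      simp [h0]
    · simp only [Set.preimage_empty, Set.image_empty, Set.union_empty]
      exact IsCompact.of_isClosed_subset hUFc (hKFc.isClosed.preimage hF.s_cont)
        (Set.preimage_mono (fun z hz => (hKFsub hz).1))

lemma finU_of_reps {v : AdjSpace m0} (hx : ∀ x, adjInc m0 x = v → x ∈ gE.finSet)
    (hy : ∀ y, adjP m0 y = v → y ∈ gF.finSet) : v ∈ (gU).finSet := by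
  rcases adj_cases v with ⟨x, rfl⟩ | ⟨y, rfl⟩
  · by_cases hxr : x ∈ Set.range m0
    · obtain ⟨g, rfl⟩ := hxr
      rw [adjInc_glue m0 g]
      exact finU_glued hE hF hGF hm0 hm1 hinj0 hinj1 hF1s hF1r hGE g (hx (m0 g) rfl)
        (hy g.1 (adjInc_glue m0 g).symm)
    · exact finU_inc_only hE hF hGF hm0 hm1 hinj0 hinj1 hF1s hF1r hGE hxr (hx x rfl)
  · by_cases hyG : y ∈ G0
    · exact finU_glued hE hF hGF hm0 hm1 hinj0 hinj1 hF1s hF1r hGE ⟨y, hyG⟩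
        (hx (m0 ⟨y, hyG⟩) (adjInc_glue m0 ⟨y, hyG⟩)) (hy y rfl)
    · exact finU_p_only hE hF hGF hm0 hm1 hinj0 hinj1 hF1s hF1r hGE hyG (hy y rfl)

lemma range_sU : Set.range (gU).s
    = adjInc m0 '' (Set.range gE.s) ∪ adjP m0 '' (Set.range gF.s) := by
  ext v
  constructor
  · rintro ⟨e, rfl⟩
    rcases adj_cases e with ⟨e', rfl⟩ | ⟨e', rfl⟩
    · exact Or.inl ⟨gE.s e', ⟨e', rfl⟩, rfl⟩
    · exact Or.inr ⟨gF.s e', ⟨e', rfl⟩, rfl⟩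
  · rintro (⟨_, ⟨e, rfl⟩, rfl⟩ | ⟨_, ⟨e, rfl⟩, rfl⟩)
    · exact ⟨adjInc m1 e, rfl⟩
    · exact ⟨adjP m1 e, rfl⟩

lemma closure_range_sU : closure (Set.range (gU).s)
    = adjInc m0 '' closure (Set.range gE.s) ∪ adjP m0 '' closure (Set.range gF.s) := by
  rw [range_sU hE hF hGF hm0 hm1 hinj0 hinj1 hF1s hF1r hGE, closure_union,
    (isClosedEmbedding_adjInc hGF.closed0 hm0.1).closure_image_eq,
    (isClosedEmbedding_adjP (aux_m0_proper hE hF hGF hm0 hm1 hinj0 hinj1 hF1s hF1r hGE)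
      hinj0).closure_image_eq]

lemma sink_rep_inc {x : VE} (hx : x ∈ gE.sinkSet) (hns : adjInc m0 x ∉ (gU).sinkSet) :
    x ∈ m0 '' (Subtype.val ⁻¹' closure (Set.range gF.s)) := by
  rw [GraphData.mem_sinkSet, not_not] at hns
  rw [closure_range_sU hE hF hGF hm0 hm1 hinj0 hinj1 hF1s hF1r hGE] at hns
  rcases hns with ⟨x', hx', he⟩ | ⟨y, hy, he⟩
  · have hxx : x' = x := adjInc_injective m0 he
    rw [hxx] at hx'
    exact absurd hx' hx
  · obtain ⟨h, hf⟩ := adjInc_eq_adjP.mp he.symm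
    exact ⟨⟨y, h⟩, hy, hf⟩

lemma sink_rep_p {y : VF} (hy : y ∈ gF.sinkSet) (hns : adjP m0 y ∉ (gU).sinkSet) :
    ∃ h : y ∈ G0, m0 ⟨y, h⟩ ∈ closure (Set.range gE.s) := by
  rw [GraphData.mem_sinkSet, not_not] at hns
  rw [closure_range_sU hE hF hGF hm0 hm1 hinj0 hinj1 hF1s hF1r hGE] at hns
  rcases hns with ⟨x, hx, he⟩ | ⟨y', hy', he⟩
  · obtain ⟨h, hf⟩ := adjInc_eq_adjP.mp he
    refine ⟨h, ?_⟩
    rw [hf]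
    exact hx
  · have hyy : y' = y := adjP_injective hinj0 he
    rw [hyy] at hy'
    exact absurd hy' hy

lemma sing_of_glued_sinkE (a : G0) (h : m0 a ∉ closure (Set.range gE.s)) :
    a.1 ∈ gF.singSet := by
  rw [GraphData.mem_singSet]
  intro hreg
  obtain ⟨e, hse, hre⟩ := hGF.negInv a.1 ⟨a.2, hreg⟩
  have he1 : e ∈ G1 := hGF.r_pre hre
  have h2 := hF1s ⟨e, he1⟩
  have ha : (⟨gF.s e, hGF.s_maps he1⟩ : G0) = a := Subtype.ext hse
  rw [ha] at h2
  exact h (subset_closure ⟨m1 ⟨e, he1⟩, h2⟩)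

lemma sing_of_glued_sinkF (a : G0) (h : a.1 ∉ closure (Set.range gF.s)) :
    m0 a ∈ gE.singSet := by
  rw [GraphData.mem_singSet]
  intro hreg
  obtain ⟨e, hse, hre⟩ := hGE.negInv (m0 a) ⟨⟨a, rfl⟩, hreg⟩
  obtain ⟨e', rfl⟩ := hGE.r_pre hre
  have h2 := hF1s e'
  rw [hse] at h2
  have h3 := hinj0 h2
  exact h (subset_closure ⟨e', (congrArg Subtype.val h3).symm⟩)

lemma main_sinkF {y : VF} (hy : y ∈ closure gF.sinkSet) : adjP m0 y ∈ (gU).singSet := by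
  by_contra hns
  rw [GraphData.mem_singSet, not_not] at hns
  have hOopen : IsOpen ((gU).regSet) := GraphData.isOpen_regSet _
  have hpO : IsOpen (adjP m0 ⁻¹' (gU).regSet) := hOopen.preimage continuous_adjP
  obtain ⟨y', hy'1, hy'2⟩ : (gF.sinkSet ∩ adjP m0 ⁻¹' (gU).regSet).Nonempty := by
    obtain ⟨z, hz1, hz2⟩ := mem_closure_iff.mp hy _ hpO hns
    exact ⟨z, hz2, hz1⟩
  have hreg' : adjP m0 y' ∈ (gU).regSet := hy'2
  have hnotsink : adjP m0 y' ∉ (gU).sinkSet := fun hs =>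
    (GraphData.mem_regSet.mp hreg').2 (subset_closure hs)
  obtain ⟨hG, hclE⟩ :=
    sink_rep_p hE hF hGF hm0 hm1 hinj0 hinj1 hF1s hF1r hGE hy'1 hnotsink
  have hclsink : m0 (⟨y', hG⟩ : G0) ∈ closure gE.sinkSet := by
    have h2 := sing_of_glued_sinkF hE hF hGF hm0 hm1 hinj0 hinj1 hF1s hF1r hGE ⟨y', hG⟩ hy'1
    rw [GraphData.singSet_eq] at h2
    rcases h2 with h2 | h2
    · exact absurd (finU_rep_inc hE hF hGF hm0 hm1 hinj0 hinj1 hF1s hF1r hGE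
        (GraphData.mem_regSet.mp hreg').1 (adjInc_glue m0 ⟨y', hG⟩)) h2
    · exact h2
  have hiO : m0 (⟨y', hG⟩ : G0) ∈ adjInc m0 ⁻¹' (gU).regSet := by
    show adjInc m0 (m0 (⟨y', hG⟩ : G0)) ∈ (gU).regSet
    rw [adjInc_glue m0 (⟨y', hG⟩ : G0)]
    exact hreg'
  have hmem : m0 (⟨y', hG⟩ : G0) ∈ closure (gE.sinkSet ∩ adjInc m0 ⁻¹' (gU).regSet) :=
    mem_closure_inter_of_open hclsink (hOopen.preimage continuous_adjInc) hiO
  have hsub : gE.sinkSet ∩ adjInc m0 ⁻¹' (gU).regSet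
      ⊆ m0 '' (Subtype.val ⁻¹' closure (Set.range gF.s)) := by
    rintro x ⟨hx1, hx2⟩
    exact sink_rep_inc hE hF hGF hm0 hm1 hinj0 hinj1 hF1s hF1r hGE hx1
      (fun hs => (GraphData.mem_regSet.mp hx2).2 (subset_closure hs))
  have hBc : IsClosed (m0 '' (Subtype.val ⁻¹' closure (Set.range gF.s))) :=
    (aux_m0_proper hE hF hGF hm0 hm1 hinj0 hinj1 hF1s hF1r hGE).isClosedMap _
      (isClosed_closure.preimage continuous_subtype_val)
  obtain ⟨a', ha', hval⟩ := closure_minimal hsub hBc hmem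
  have haa : a' = (⟨y', hG⟩ : G0) := hinj0 hval
  rw [haa] at ha'
  exact hy'1 ha'

lemma main_sinkE {x : VE} (hx : x ∈ closure gE.sinkSet) : adjInc m0 x ∈ (gU).singSet := by
  by_contra hns
  rw [GraphData.mem_singSet, not_not] at hns
  have hOopen : IsOpen ((gU).regSet) := GraphData.isOpen_regSet _
  have hiOopen : IsOpen (adjInc m0 ⁻¹' (gU).regSet) := hOopen.preimage continuous_adjInc
  obtain ⟨x', hx'1, hx'2⟩ : (gE.sinkSet ∩ adjInc m0 ⁻¹' (gU).regSet).Nonempty := by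
    obtain ⟨z, hz1, hz2⟩ := mem_closure_iff.mp hx _ hiOopen hns
    exact ⟨z, hz2, hz1⟩
  have hreg' : adjInc m0 x' ∈ (gU).regSet := hx'2
  have hB := sink_rep_inc hE hF hGF hm0 hm1 hinj0 hinj1 hF1s hF1r hGE hx'1
    (fun hs => (GraphData.mem_regSet.mp hreg').2 (subset_closure hs))
  obtain ⟨a, haclF, rfl⟩ := hB
  have hsingF := sing_of_glued_sinkE hE hF hGF hm0 hm1 hinj0 hinj1 hF1s hF1r hGE a hx'1
  rw [GraphData.singSet_eq] at hsingF
  have hregP : adjP m0 a.1 ∈ (gU).regSet := by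
    rw [← adjInc_glue m0 a]
    exact hreg'
  rcases hsingF with h2 | h2
  · exact h2 (finU_rep_p hE hF hGF hm0 hm1 hinj0 hinj1 hF1s hF1r hGE
      (GraphData.mem_regSet.mp hregP).1 rfl)
  · exact (main_sinkF hE hF hGF hm0 hm1 hinj0 hinj1 hF1s hF1r hGE h2) hregP

end UnionMain

/-- Let `E ∪ F` be a regular union graph, i.e. the intersection graph `E ∩ F` (here
`(G0, G1)` inside `F`, realized inside `E` via the injective maps `m⁰`, `m¹`) is a regular
closed subgraph of both `E` and `F`. Then, identifying `E⁰` and `F⁰` with their images in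
`(E ∪ F)⁰`, one has `(E ∪ F)⁰_sing = E⁰_sing ∪ F⁰_sing`. -/
theorem unionGraph_singSet_eq_union
    {VE EE VF EF : Type*} [TopologicalSpace VE] [TopologicalSpace EE]
    [TopologicalSpace VF] [TopologicalSpace EF]
    [LocallyCompactSpace VE] [T2Space VE] [LocallyCompactSpace EE] [T2Space EE]
    [LocallyCompactSpace VF] [T2Space VF] [LocallyCompactSpace EF] [T2Space EF]
    (gE : GraphData VE EE) (gF : GraphData VF EF)
    (hE : IsTopGraph gE) (hF : IsTopGraph gF)
    {G0 : Set VF} {G1 : Set EF}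
    (hGF : IsRegularClosedSubgraph gF G0 G1)
    (m0 : G0 → VE) (m1 : G1 → EE) (hm0 : ProperCont m0) (hm1 : ProperCont m1)
    (hinj0 : Function.Injective m0) (hinj1 : Function.Injective m1)
    (hF1s : ∀ e : G1, gE.s (m1 e) = m0 ⟨gF.s e, hGF.s_maps e.2⟩)
    (hF1r : ∀ e : G1, gE.r (m1 e) = m0 ⟨gF.r e, hGF.r_maps e.2⟩)
    (hGE : IsRegularClosedSubgraph gE (Set.range m0) (Set.range m1)) :
    (adjGraph gE gF m0 m1 hGF.s_maps hGF.r_maps hF1s hF1r).singSet =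
      adjInc m0 '' gE.singSet ∪ adjP m0 '' gF.singSet := by
  ext v
  rw [GraphData.singSet_eq]
  constructor
  · rintro (hv | hv)
    · have h2 := mt (fun hp : (∀ x, adjInc m0 x = v → x ∈ gE.finSet) ∧
          (∀ y, adjP m0 y = v → y ∈ gF.finSet) =>
        finU_of_reps hE hF hGF hm0 hm1 hinj0 hinj1 hF1s hF1r hGE hp.1 hp.2) hv
      rw [not_and_or] at h2
      rcases h2 with h2 | h2
      · push_neg at h2
        obtain ⟨x, hxe, hxf⟩ := h2
        exact Or.inl ⟨x, by rw [GraphData.singSet_eq]; exact Or.inl hxf, hxe⟩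
      · push_neg at h2
        obtain ⟨y, hye, hyf⟩ := h2
        exact Or.inr ⟨y, by rw [GraphData.singSet_eq]; exact Or.inl hyf, hye⟩
    · have h1 : (adjGraph gE gF m0 m1 hGF.s_maps hGF.r_maps hF1s hF1r).sinkSet
          ⊆ adjInc m0 '' gE.sinkSet ∪ adjP m0 '' gF.sinkSet := by
        intro u hu
        rcases adj_cases u with ⟨x, rfl⟩ | ⟨y, rfl⟩
        · refine Or.inl ⟨x, ?_, rfl⟩
          rw [GraphData.mem_sinkSet] at hu ⊢
          intro hc
          exact hu (by
            rw [closure_range_sU hE hF hGF hm0 hm1 hinj0 hinj1 hF1s hF1r hGE]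
            exact Or.inl ⟨x, hc, rfl⟩)
        · refine Or.inr ⟨y, ?_, rfl⟩
          rw [GraphData.mem_sinkSet] at hu ⊢
          intro hc
          exact hu (by
            rw [closure_range_sU hE hF hGF hm0 hm1 hinj0 hinj1 hF1s hF1r hGE]
            exact Or.inr ⟨y, hc, rfl⟩)
      have h2 := closure_mono h1 hv
      rw [closure_union, (isClosedEmbedding_adjInc hGF.closed0 hm0.1).closure_image_eq,
        (isClosedEmbedding_adjP (aux_m0_proper hE hF hGF hm0 hm1 hinj0 hinj1 hF1s hF1r hGE)
          hinj0).closure_image_eq] at h2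
      rcases h2 with ⟨x, hx, rfl⟩ | ⟨y, hy, rfl⟩
      · exact Or.inl ⟨x, gE.closure_sinkSet_subset_singSet hx, rfl⟩
      · exact Or.inr ⟨y, gF.closure_sinkSet_subset_singSet hy, rfl⟩
  · rintro (⟨x, hx, rfl⟩ | ⟨y, hy, rfl⟩)
    · rw [GraphData.singSet_eq] at hx
      rcases hx with hx | hx
      · exact Or.inl (fun hfin =>
          hx (finU_rep_inc hE hF hGF hm0 hm1 hinj0 hinj1 hF1s hF1r hGE hfin rfl))
      · have h3 := main_sinkE hE hF hGF hm0 hm1 hinj0 hinj1 hF1s hF1r hGE hx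
        rw [GraphData.singSet_eq] at h3
        exact h3
    · rw [GraphData.singSet_eq] at hy
      rcases hy with hy | hy
      · exact Or.inl (fun hfin =>
          hy (finU_rep_p hE hF hGF hm0 hm1 hinj0 hinj1 hF1s hF1r hGE hfin rfl))
      · have h3 := main_sinkF hE hF hGF hm0 hm1 hinj0 hinj1 hF1s hF1r hGE hy
        rw [GraphData.singSet_eq] at h3
        exact h3
end
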